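/- Let Δ ≥ 2. For every connected infinite Δ-regular graph G, Ω_{T_Δ} ⊆ Ω_G; that is, the epidemic region of the infinite Δ-regular tree is the minimum epidemic region among all connected infinite Δ-regular graphs: whenever strategy A becomes epidemic in (T_Δ, q, r), it also becomes epidemic in (G, q, r). -/
import Mathlib


namespace Contagion

open scoped BigOperators

/-- The three strategies in the contagion game. -/
inductive Strat
  | A | B | AB
deriving DecidableEq

/-- Pairwise payoff to a player using the first strategy against a neighbor
using the second strategy, in the contagion game with parameters `q, r`. -/
noncomputable def pairPayoff (q r : ℝ) : Strat → Strat → ℝ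
  | .A, .A => 1 - q
  | .A, .B => 0
  | .A, .AB => 1 - q
  | .B, .A => 0
  | .B, .B => q
  | .B, .AB => q
  | .AB, .A => 1 - q - r
  | .AB, .B => q - r
  | .AB, .AB => max q (1 - q) - r

variable {V : Type*}

/-- Total payoff to vertex `v` for playing strategy `s` against profile `σ`. -/
noncomputable def totalPayoff (G : SimpleGraph V) (q r : ℝ) (σ : V → Strat)
    (v : V) (s : Strat) : ℝ :=
  ∑ᶠ u ∈ G.neighborSet v, pairPayoff q r s (σ u)

/-- `s` is a best response of vertex `v` to the profile `σ`. -/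
def IsBestResponse (G : SimpleGraph V) (q r : ℝ) (σ : V → Strat) (v : V) (s : Strat) : Prop :=
  ∀ s' : Strat, totalPayoff G q r σ v s' ≤ totalPayoff G q r σ v s

/-- Strategy `A` becomes epidemic in the contagion game `(G, q, r)`:
there are a finite initial set `S₀` (playing `A`, everybody else playing `B`) and a
sequence `α` of vertices in which every vertex appears at least once, such that updating
at step `n` the vertex `α n` to a best response makes every vertex eventually adopt `A`. -/
def Epidemic (G : SimpleGraph V) (q r : ℝ) : Prop :=
  ∃ (S₀ : Set V) (α : ℕ → V) (σ : ℕ → V → Strat),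
    S₀.Finite ∧
    Function.Surjective α ∧
    (∀ v ∈ S₀, σ 0 v = Strat.A) ∧
    (∀ v ∉ S₀, σ 0 v = Strat.B) ∧
    (∀ n, IsBestResponse G q r (σ n) (α n) (σ (n + 1) (α n))) ∧
    (∀ n v, v ≠ α n → σ (n + 1) v = σ n v) ∧
    (∀ v, ∃ n, σ n v = Strat.A)

/-- The epidemic region `Ω_G ⊆ ℝ²` of `G`. -/
def epidemicRegion (G : SimpleGraph V) : Set (ℝ × ℝ) :=
  {p | 0 < p.1 ∧ p.1 < 1 ∧ 0 < p.2 ∧ Epidemic G p.1 p.2}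

/-- `G` is `Δ`-regular: every vertex has exactly `Δ` neighbors. -/
def IsRegular (G : SimpleGraph V) (Δ : ℕ) : Prop :=
  ∀ v, (G.neighborSet v).ncard = Δ

/-- The number of neighbors of `v` lying in the set `S`. -/
noncomputable def degIn (G : SimpleGraph V) (v : V) (S : Set V) : ℕ :=
  (G.neighborSet v ∩ S).ncard

/-- `RT Δ`: the infinite rooted tree in which the root (the empty list) has `Δ - 1`
children and every other vertex also has `Δ - 1` children (hence degree `Δ`). -/
def RT (Δ : ℕ) : SimpleGraph (List (Fin (Δ - 1))) :=
  SimpleGraph.fromRel (fun l l' => ∃ a : Fin (Δ - 1), l' = a :: l)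

/-- `G` contains a subgraph isomorphic to `RT Δ`. -/
def HasRTCopy (Δ : ℕ) (G : SimpleGraph V) : Prop :=
  ∃ f : List (Fin (Δ - 1)) → V,
    Function.Injective f ∧ ∀ x y, (RT Δ).Adj x y → G.Adj (f x) (f y)

/-- The thick half line `HL_Δ` (for even `Δ`), columns indexed by `ℕ` starting with the
first column `0`; `(k, i)` and `(l, j)` are adjacent exactly when `|k - l| = 1`. -/
def HL (Δ : ℕ) : SimpleGraph (ℕ × Fin (Δ / 2)) :=
  SimpleGraph.fromRel (fun x y => y.1 = x.1 + 1)

/-- The epidemic region of the infinite `Δ`-regular tree: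
`{(q,r) : q,r > 0, r ≥ ((Δ-1)/Δ)q, q ≤ 1/Δ} ∪ {(q,r) : q,r > 0, 2q + Δr ≤ 1}`. -/
def treeRegion (Δ : ℕ) : Set (ℝ × ℝ) :=
  {p | 0 < p.1 ∧ 0 < p.2 ∧ ((Δ : ℝ) - 1) / Δ * p.1 ≤ p.2 ∧ p.1 ≤ 1 / Δ} ∪
  {p | 0 < p.1 ∧ 0 < p.2 ∧ 2 * p.1 + Δ * p.2 ≤ 1}

/-- The epidemic region of the thick line `L_Δ`:
`{(q,r) : 0 < q ≤ 1/2, r ≥ q/2} ∪ {(q,r) : q,r > 0, r ≤ q/2, 2q + 2r ≤ 1}`. -/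
def thickLineRegion : Set (ℝ × ℝ) :=
  {p | 0 < p.1 ∧ p.1 ≤ 1 / 2 ∧ p.1 / 2 ≤ p.2} ∪
  {p | 0 < p.1 ∧ 0 < p.2 ∧ p.2 ≤ p.1 / 2 ∧ 2 * p.1 + 2 * p.2 ≤ 1}

/-- `(SAB, SB)` is a blocking structure for the contagion game `(G, q, r)`
on a `Δ`-regular graph `G`. -/
def IsBlockingStructure (G : SimpleGraph V) (Δ : ℕ) (q r : ℝ) (SAB SB : Set V) : Prop :=
  Disjoint SAB SB ∧ (SAB.Nonempty ∨ SB.Nonempty) ∧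
  (∀ v ∈ SAB, r / q * Δ < (degIn G v SB : ℝ)) ∧
  ∀ v ∈ SB,
    (1 - q - r) * Δ < (1 - q) * (degIn G v SB : ℝ) + min q (1 - q) * (degIn G v SAB : ℝ) ∧
    (1 - q) * Δ < (degIn G v SB : ℝ) + q * (degIn G v SAB : ℝ)

/-- The two strategies of the `A`-`B` coordination game. -/
inductive CStrat
  | A | B
deriving DecidableEq

/-- Pairwise payoff in the `A`-`B` coordination game `(G, q)`. -/
noncomputable def cPairPayoff (q : ℝ) : CStrat → CStrat → ℝ
  | .A, .A => 1 - q
  | .A, .B => 0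
  | .B, .A => 0
  | .B, .B => q

/-- Total payoff to `v` for playing `s` against profile `σ` in the coordination game. -/
noncomputable def cTotalPayoff (G : SimpleGraph V) (q : ℝ) (σ : V → CStrat)
    (v : V) (s : CStrat) : ℝ :=
  ∑ᶠ u ∈ G.neighborSet v, cPairPayoff q s (σ u)

/-- `s` is a best response of `v` to `σ` in the coordination game. -/
def CIsBestResponse (G : SimpleGraph V) (q : ℝ) (σ : V → CStrat) (v : V) (s : CStrat) : Prop :=
  ∀ s' : CStrat, cTotalPayoff G q σ v s' ≤ cTotalPayoff G q σ v s

/-- Strategy `A` becomes epidemic in the coordination game `(G, q)` starting from the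
initial set `S₀`. -/
def CoordEpidemicFrom (G : SimpleGraph V) (q : ℝ) (S₀ : Set V) : Prop :=
  ∃ (α : ℕ → V) (σ : ℕ → V → CStrat),
    Function.Surjective α ∧
    (∀ v ∈ S₀, σ 0 v = CStrat.A) ∧
    (∀ v ∉ S₀, σ 0 v = CStrat.B) ∧
    (∀ n, CIsBestResponse G q (σ n) (α n) (σ (n + 1) (α n))) ∧
    (∀ n v, v ≠ α n → σ (n + 1) v = σ n v) ∧
    (∀ v, ∃ n, σ n v = CStrat.A)

/-- Strategy `A` becomes epidemic in the coordination game `(G, q)`. -/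
def CoordEpidemic (G : SimpleGraph V) (q : ℝ) : Prop :=
  ∃ S₀ : Set V, S₀.Finite ∧ CoordEpidemicFrom G q S₀

section Aux

noncomputable def cnt (G : SimpleGraph V) (σ : V → Strat) (v : V) (s : Strat) : ℕ :=
  (G.neighborSet v ∩ {u | σ u = s}).ncard

lemma nbr_finite {G : SimpleGraph V} {Δ : ℕ} (hreg : IsRegular G Δ) (hΔ : 2 ≤ Δ) (v : V) :
    (G.neighborSet v).Finite := by
  by_contra h
  have := Set.Infinite.ncard (s := G.neighborSet v) h
  rw [hreg v] at this; omega

lemma cnt_eq_filter_card {G : SimpleGraph V} {v : V} (hfin : (G.neighborSet v).Finite)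
    (σ : V → Strat) (s : Strat) [DecidableEq V] :
    cnt G σ v s = (hfin.toFinset.filter (fun u => σ u = s)).card := by
  rw [cnt, ← Set.ncard_coe_finset]
  congr 1
  ext u
  simp [Set.mem_inter_iff, hfin.mem_toFinset]

lemma cnt_sum {G : SimpleGraph V} {Δ : ℕ} (hreg : IsRegular G Δ) (hΔ : 2 ≤ Δ)
    (σ : V → Strat) (v : V) :
    cnt G σ v .A + cnt G σ v .B + cnt G σ v .AB = Δ := by
  classical
  have hfin := nbr_finite hreg hΔ v
  rw [cnt_eq_filter_card hfin, cnt_eq_filter_card hfin, cnt_eq_filter_card hfin]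
  have hc : hfin.toFinset.card = Δ := by
    rw [← Set.ncard_coe_finset, hfin.coe_toFinset, hreg v]
  set t := hfin.toFinset
  have h1 := Finset.card_filter_add_card_filter_not (s := t)
      (p := (fun u => σ u = .A))
  have h2 := Finset.card_filter_add_card_filter_not
      (s := t.filter (fun u => ¬ σ u = .A)) (p := (fun u => σ u = .B))
  rw [Finset.filter_filter, Finset.filter_filter] at h2
  have e1 : t.filter (fun u => ¬ σ u = .A ∧ σ u = .B) = t.filter (fun u => σ u = .B) := by
    apply Finset.filter_congr; intro x _; constructor
    · tauto
    · intro h; exact ⟨by simp [h], h⟩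
  have e2 : t.filter (fun u => ¬ σ u = .A ∧ ¬ σ u = .B) = t.filter (fun u => σ u = .AB) := by
    apply Finset.filter_congr; intro x _; constructor
    · rintro ⟨a, b⟩; cases h : σ x <;> simp_all
    · intro h; rw [h]; exact ⟨by simp, by simp⟩
  rw [e1, e2] at h2
  omega

lemma totalPayoff_eq {G : SimpleGraph V} {Δ : ℕ} (hreg : IsRegular G Δ) (hΔ : 2 ≤ Δ)
    (q r : ℝ) (σ : V → Strat) (v : V) (s : Strat) :
    totalPayoff G q r σ v s =
      (cnt G σ v .A : ℝ) * pairPayoff q r s .A + (cnt G σ v .B : ℝ) * pairPayoff q r s .B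
        + (cnt G σ v .AB : ℝ) * pairPayoff q r s .AB := by
  classical
  have hfin := nbr_finite hreg hΔ v
  rw [totalPayoff, ← hfin.coe_toFinset, finsum_mem_coe_finset]
  rw [cnt_eq_filter_card hfin, cnt_eq_filter_card hfin, cnt_eq_filter_card hfin]
  set t := hfin.toFinset with ht
  have h1 : ∑ u ∈ t, pairPayoff q r s (σ u)
      = ∑ u ∈ t.filter (fun u => σ u = .A), pairPayoff q r s (σ u)
      + ∑ u ∈ t.filter (fun u => ¬ σ u = .A), pairPayoff q r s (σ u) :=
    (Finset.sum_filter_add_sum_filter_not t _ _).symm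
  have h2 : ∑ u ∈ t.filter (fun u => ¬ σ u = .A), pairPayoff q r s (σ u)
      = ∑ u ∈ (t.filter (fun u => ¬ σ u = .A)).filter (fun u => σ u = .B), pairPayoff q r s (σ u)
      + ∑ u ∈ (t.filter (fun u => ¬ σ u = .A)).filter (fun u => ¬ σ u = .B),
          pairPayoff q r s (σ u) :=
    (Finset.sum_filter_add_sum_filter_not _ _ _).symm
  rw [Finset.filter_filter, Finset.filter_filter] at h2
  have e1 : t.filter (fun u => ¬ σ u = .A ∧ σ u = .B) = t.filter (fun u => σ u = .B) := by
    apply Finset.filter_congr; intro x _; constructor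
    · tauto
    · intro h; exact ⟨by simp [h], h⟩
  have e2 : t.filter (fun u => ¬ σ u = .A ∧ ¬ σ u = .B) = t.filter (fun u => σ u = .AB) := by
    apply Finset.filter_congr; intro x _; constructor
    · rintro ⟨a, b⟩; cases h : σ x <;> simp_all
    · intro h; rw [h]; exact ⟨by simp, by simp⟩
  rw [e1, e2] at h2
  rw [h1, h2]
  have cc : ∀ s'' : Strat, ∑ u ∈ t.filter (fun u => σ u = s''), pairPayoff q r s (σ u)
      = ((t.filter (fun u => σ u = s'')).card : ℝ) * pairPayoff q r s s'' := by
    intro s''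
    rw [Finset.sum_congr rfl (fun x hx => by
      rw [(Finset.mem_filter.mp hx).2]), Finset.sum_const, nsmul_eq_mul]
  rw [cc, cc, cc]; ring

lemma cnt_eq_zero {G : SimpleGraph V} {σ : V → Strat} {v : V} {s : Strat}
    (h : ∀ u ∈ G.neighborSet v, σ u ≠ s) : cnt G σ v s = 0 := by
  rw [cnt]
  have : G.neighborSet v ∩ {u | σ u = s} = ∅ :=
    Set.eq_empty_of_forall_notMem (fun u ⟨h1, h2⟩ => h u h1 h2)
  rw [this, Set.ncard_empty]

/-- If `B` strictly beats `A` and `AB`, any best response is `B`. -/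
lemma bestResponse_eq_B {G : SimpleGraph V} {q r : ℝ} {σ : V → Strat} {v : V}
    (hA : totalPayoff G q r σ v .A < totalPayoff G q r σ v .B)
    (hAB : totalPayoff G q r σ v .AB < totalPayoff G q r σ v .B)
    {s : Strat} (hs : IsBestResponse G q r σ v s) : s = .B := by
  cases s with
  | A => exact absurd (hs .B) (by linarith)
  | B => rfl
  | AB => exact absurd (hs .B) (by linarith)

lemma bestResponse_ne_A {G : SimpleGraph V} {q r : ℝ} {σ : V → Strat} {v : V} {s' : Strat}
    (h : totalPayoff G q r σ v .A < totalPayoff G q r σ v s')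
    {s : Strat} (hs : IsBestResponse G q r σ v s) : s ≠ .A := by
  rintro rfl
  exact absurd (hs s') (by linarith)

/-- Forced B under the complement region, when no `A`-neighbors and at most one
`AB`-neighbor. -/
lemma forced_B {G : SimpleGraph V} {Δ : ℕ} (hreg : IsRegular G Δ) (hΔ : 2 ≤ Δ)
    {q r : ℝ} (hq : 0 < q) (hq1 : q < 1) (hr : 0 < r)
    (h1 : 1 < 2*q + Δ*r) (h2 : 1 < q*(Δ+1)) (σ : V → Strat) (v : V)
    (ha : cnt G σ v .A = 0) (hab : cnt G σ v .AB ≤ 1)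
    {s : Strat} (hs : IsBestResponse G q r σ v s) : s = .B := by
  have hsum := cnt_sum hreg hΔ σ v
  set a := cnt G σ v .A
  set b := cnt G σ v .B
  set ab := cnt G σ v .AB
  have hd : (2:ℝ) ≤ (Δ:ℕ) := by exact_mod_cast hΔ
  have hsum' : (a:ℝ) + b + ab = Δ := by exact_mod_cast hsum
  have ha' : (a:ℝ) = 0 := by exact_mod_cast ha
  have hab' : (ab:ℝ) ≤ 1 := by exact_mod_cast hab
  have hab0 : (0:ℝ) ≤ (ab:ℝ) := Nat.cast_nonneg _
  have hb0 : (0:ℝ) ≤ (b:ℝ) := Nat.cast_nonneg _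
  apply bestResponse_eq_B ?_ ?_ hs <;>
    rw [totalPayoff_eq hreg hΔ, totalPayoff_eq hreg hΔ] <;> simp only [pairPayoff]
  · nlinarith
  · rcases le_total q (1-q) with h | h
    · rw [max_eq_right h]; nlinarith
    · rw [max_eq_left h]; nlinarith

/-- Forced B when all neighbors play B. -/
lemma forced_B_allB {G : SimpleGraph V} {Δ : ℕ} (hreg : IsRegular G Δ) (hΔ : 2 ≤ Δ)
    {q r : ℝ} (hq : 0 < q) (hq1 : q < 1) (hr : 0 < r) (σ : V → Strat) (v : V)
    (ha : cnt G σ v .A = 0) (hab : cnt G σ v .AB = 0)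
    {s : Strat} (hs : IsBestResponse G q r σ v s) : s = .B := by
  have hsum := cnt_sum hreg hΔ σ v
  set a := cnt G σ v .A
  set b := cnt G σ v .B
  set ab := cnt G σ v .AB
  have hd : (2:ℝ) ≤ (Δ:ℕ) := by exact_mod_cast hΔ
  have hsum' : (a:ℝ) + b + ab = Δ := by exact_mod_cast hsum
  have ha' : (a:ℝ) = 0 := by exact_mod_cast ha
  have hab' : (ab:ℝ) = 0 := by exact_mod_cast hab
  apply bestResponse_eq_B ?_ ?_ hs <;>
    rw [totalPayoff_eq hreg hΔ, totalPayoff_eq hreg hΔ] <;> simp only [pairPayoff]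
  · nlinarith
  · rcases le_total q (1-q) with h | h
    · rw [max_eq_right h]; nlinarith
    · rw [max_eq_left h]; nlinarith

/-- No best response is A when at most one neighbor plays A or AB, in the complement
region. -/
lemma forced_ne_A {G : SimpleGraph V} {Δ : ℕ} (hreg : IsRegular G Δ) (hΔ : 2 ≤ Δ)
    {q r : ℝ} (hq : 0 < q) (hq1 : q < 1) (hr : 0 < r)
    (hcase : 1 < q*Δ ∨ (r*Δ < q*((Δ:ℝ)-1) ∧ 2*q ≤ 1)) (σ : V → Strat) (v : V)
    (haab : cnt G σ v .A + cnt G σ v .AB ≤ 1)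
    {s : Strat} (hs : IsBestResponse G q r σ v s) : s ≠ .A := by
  have hsum := cnt_sum hreg hΔ σ v
  set a := cnt G σ v .A
  set b := cnt G σ v .B
  set ab := cnt G σ v .AB
  have hd : (2:ℝ) ≤ (Δ:ℕ) := by exact_mod_cast hΔ
  have hsum' : (a:ℝ) + b + ab = Δ := by exact_mod_cast hsum
  have haab' : (a:ℝ) + ab ≤ 1 := by exact_mod_cast haab
  have hab0 : (0:ℝ) ≤ (ab:ℝ) := Nat.cast_nonneg _
  have hb0 : (0:ℝ) ≤ (b:ℝ) := Nat.cast_nonneg _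
  have ha0 : (0:ℝ) ≤ (a:ℝ) := Nat.cast_nonneg _
  rcases hcase with hcase | ⟨hcase, hq2⟩
  · refine bestResponse_ne_A (s' := .B) ?_ hs
    rw [totalPayoff_eq hreg hΔ, totalPayoff_eq hreg hΔ]; simp only [pairPayoff]
    nlinarith
  · refine bestResponse_ne_A (s' := .AB) ?_ hs
    rw [totalPayoff_eq hreg hΔ, totalPayoff_eq hreg hΔ]; simp only [pairPayoff]
    rw [max_eq_right (by linarith : q ≤ 1 - q)]
    nlinarith

section TreeLemmas
variable {G : SimpleGraph V} {s₀ v : V}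

lemma path_length_eq_dist (hac : G.IsAcyclic) {x y : V} (p : G.Walk x y) (hp : p.IsPath) :
    p.length = G.dist x y := by
  obtain ⟨p', hp', hl'⟩ := SimpleGraph.Reachable.exists_path_of_dist p.reachable
  have := SimpleGraph.isAcyclic_iff_path_unique.mp hac ⟨p, hp⟩ ⟨p', hp'⟩
  have hpp : p = p' := congrArg Subtype.val this
  rw [hpp]; exact hl'

lemma concat_isPath {x y z : V} {p : G.Walk x y} (hp : p.IsPath) (h : G.Adj y z)
    (hz : z ∉ p.support) : (p.concat h).IsPath := by
  rw [← SimpleGraph.Walk.isPath_reverse_iff, SimpleGraph.Walk.reverse_concat]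
  rw [SimpleGraph.Walk.cons_isPath_iff]
  refine ⟨SimpleGraph.Walk.isPath_reverse_iff _ |>.mpr hp, ?_⟩
  rwa [SimpleGraph.Walk.support_reverse, List.mem_reverse]

lemma adj_dist (hac : G.IsAcyclic) (s₀ : V) {u v : V} (h : G.Adj u v)
    (hreach : G.Reachable s₀ v) :
    G.dist s₀ v = G.dist s₀ u + 1 ∨ G.dist s₀ u = G.dist s₀ v + 1 := by
  haveI := Classical.decEq V
  obtain ⟨p, hp, hl⟩ := hreach.exists_path_of_dist
  by_cases hu : u ∈ p.support
  · left
    have hsplit := p.take_spec hu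
    have htake := hp.takeUntil hu
    have hdrop := hp.dropUntil hu
    have hlen1 : (p.dropUntil u hu).length = 1 := by
      rw [path_length_eq_dist hac _ hdrop]
      exact SimpleGraph.dist_eq_one_iff_adj.mpr h
    have hlen2 : (p.takeUntil u hu).length = G.dist s₀ u :=
      path_length_eq_dist hac _ htake
    have := congrArg SimpleGraph.Walk.length hsplit
    rw [SimpleGraph.Walk.length_append, hlen1, hlen2] at this
    omega
  · right
    have hq := concat_isPath hp h.symm hu
    have := path_length_eq_dist hac _ hq
    rw [SimpleGraph.Walk.length_concat, hl] at this
    omega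

lemma unique_parent (hac : G.IsAcyclic) (s₀ : V) {u₁ u₂ v : V}
    (h1 : G.Adj u₁ v) (h2 : G.Adj u₂ v)
    (hd1 : G.dist s₀ u₁ < G.dist s₀ v) (hd2 : G.dist s₀ u₂ < G.dist s₀ v)
    (hr : G.Reachable s₀ v) : u₁ = u₂ := by
  haveI := Classical.decEq V
  by_contra hne
  have key : ∀ (u : V) (hadj : G.Adj u v), G.dist s₀ u < G.dist s₀ v →
      ∃ (p : G.Walk s₀ u), (p.concat hadj).IsPath := by
    intro u hadj hdu
    have hru : G.Reachable s₀ u := hr.trans hadj.symm.reachable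
    obtain ⟨p, hp, hl⟩ := hru.exists_path_of_dist
    have hv : v ∉ p.support := by
      intro hmem
      have h1' := SimpleGraph.dist_le (p.takeUntil v hmem)
      have h2' := SimpleGraph.Walk.length_takeUntil_le p hmem
      omega
    exact ⟨p, concat_isPath hp hadj hv⟩
  obtain ⟨p1, hp1⟩ := key u₁ h1 hd1
  obtain ⟨p2, hp2⟩ := key u₂ h2 hd2
  have := SimpleGraph.isAcyclic_iff_path_unique.mp hac ⟨_, hp1⟩ ⟨_, hp2⟩
  have heq : p1.concat h1 = p2.concat h2 := congrArg Subtype.val this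
  have hrev := congrArg SimpleGraph.Walk.reverse heq
  rw [SimpleGraph.Walk.reverse_concat, SimpleGraph.Walk.reverse_concat] at hrev
  injection hrev with h1 h2 h3
  exact hne h2

lemma exists_adj_dist (hreach : G.Reachable s₀ v) {k : ℕ} (h : G.dist s₀ v = k + 1) :
    ∃ u, G.Adj u v ∧ G.dist s₀ u = k := by
  obtain ⟨p, hl⟩ := hreach.exists_walk_length_eq_dist
  have hplen : p.length = k + 1 := by rw [hl, h]
  cases hrev : p.reverse with
  | nil =>
    have h0 := congrArg SimpleGraph.Walk.length hrev
    rw [SimpleGraph.Walk.length_reverse, SimpleGraph.Walk.length_nil] at h0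
    omega
  | cons hadj q =>
    rename_i u
    refine ⟨u, hadj.symm, ?_⟩
    have hlen : q.length = k := by
      have h0 := congrArg SimpleGraph.Walk.length hrev
      rw [SimpleGraph.Walk.length_reverse, SimpleGraph.Walk.length_cons] at h0
      omega
    have h1 : G.dist s₀ u ≤ k := by
      have := SimpleGraph.dist_le q.reverse
      rwa [SimpleGraph.Walk.length_reverse, hlen] at this
    have hru : G.Reachable s₀ u := q.reverse.reachable
    obtain ⟨w, hw⟩ := hru.exists_walk_length_eq_dist
    have h2 : G.dist s₀ v ≤ G.dist s₀ u + 1 := by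
      have := SimpleGraph.dist_le (w.concat hadj.symm)
      rwa [SimpleGraph.Walk.length_concat, hw] at this
    omega

lemma ball_finite (hlf : ∀ w : V, (G.neighborSet w).Finite) (s₀ : V) (n : ℕ) :
    {v : V | G.Reachable s₀ v ∧ G.dist s₀ v ≤ n}.Finite := by
  induction n with
  | zero =>
    apply Set.Finite.subset (Set.finite_singleton s₀)
    rintro v ⟨hr, hd⟩
    have : G.dist s₀ v = 0 := by omega
    rw [hr.dist_eq_zero_iff] at this
    simp [this]
  | succ n ih =>
    apply Set.Finite.subset (Set.Finite.union ih (Set.Finite.biUnion ih (fun u _ => hlf u)))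
    rintro v ⟨hr, hd⟩
    rcases Nat.lt_or_ge (G.dist s₀ v) (n+1) with h | h
    · exact Or.inl ⟨hr, by omega⟩
    · have hdv : G.dist s₀ v = n + 1 := by omega
      obtain ⟨u, hadj, hdu⟩ := exists_adj_dist hr hdv
      right
      refine Set.mem_biUnion (⟨hr.trans hadj.symm.reachable, by omega⟩ : _ ∧ _) ?_
      exact (SimpleGraph.mem_neighborSet _ _ _).mpr hadj
lemma exists_far (hc : G.Connected) [Infinite V] (hlf : ∀ w : V, (G.neighborSet w).Finite)
    (s₀ : V) (n : ℕ) : ∃ v, n ≤ G.dist s₀ v := by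
  by_contra hcon
  push_neg at hcon
  have : (Set.univ : Set V).Finite := by
    apply Set.Finite.subset (ball_finite hlf s₀ n)
    intro v _
    exact ⟨hc s₀ v, (hcon v).le⟩
  exact Set.infinite_univ this

end TreeLemmas

/-- Part B: no epidemic on the tree outside the tree region. -/
theorem no_epidemic_tree {W : Type*} (Δ : ℕ) (hΔ : 2 ≤ Δ)
    (T : SimpleGraph W) (hTInf : Infinite W) (hTConn : T.Connected)
    (hTAcyc : T.IsAcyclic) (hTReg : IsRegular T Δ)
    {q r : ℝ} (hq : 0 < q) (hq1 : q < 1) (hr : 0 < r)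
    (h1 : 1 < 2*q + Δ*r) (hcase : 1 < q*Δ ∨ r*Δ < q*((Δ:ℝ)-1)) :
    ¬ Epidemic T q r := by
  classical
  rintro ⟨S₀, α, σ, hfin, hsurj, hA0, hB0, hBR, hstay, hall⟩
  have hlf : ∀ w : W, (T.neighborSet w).Finite := nbr_finite hTReg hΔ
  have hd2 : (2:ℝ) ≤ (Δ:ℕ) := by exact_mod_cast hΔ
  have h2 : 1 < q*((Δ:ℝ)+1) := by
    rcases hcase with h | h
    · nlinarith
    · nlinarith
  have hcase' : 1 < q*Δ ∨ (r*Δ < q*((Δ:ℝ)-1) ∧ 2*q ≤ 1) := by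
    rcases le_or_gt (q*Δ) 1 with hle | hlt
    · right
      refine ⟨?_, by nlinarith⟩
      rcases hcase with h | h
      · linarith
      · exact h
    · left; exact hlt
  rcases Set.eq_empty_or_nonempty S₀ with hS0 | ⟨s₀, hs₀⟩
  · -- empty initial set: everything stays B forever
    have hallB : ∀ n v, σ n v = .B := by
      intro n
      induction n with
      | zero => intro v; exact hB0 v (by simp [hS0])
      | succ n ih =>
        intro v
        by_cases hv : v = α n
        · subst hv
          refine forced_B_allB hTReg hΔ hq hq1 hr (σ n) (α n) ?_ ?_ (hBR n) <;>
          · apply cnt_eq_zero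
            intro u _ hu
            rw [ih u] at hu; exact Strat.noConfusion hu
        · rw [hstay n v hv]; exact ih v
    obtain ⟨v⟩ := hTConn.nonempty
    obtain ⟨n, hn⟩ := hall v
    rw [hallB n v] at hn; exact Strat.noConfusion hn
  · set d : W → ℕ := fun v => T.dist s₀ v with hd
    set R : ℕ := hfin.toFinset.sup d + 1 with hR
    have hSR : ∀ w ∈ S₀, d w < R := by
      intro w hw
      have := Finset.le_sup (f := d) (hfin.mem_toFinset.mpr hw)
      omega
    -- the invariant
    have Inv : ∀ n, (∀ v, R ≤ d v → σ n v ≠ .A) ∧ (∀ v, R+1 ≤ d v → σ n v = .B) := by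
      intro n
      induction n with
      | zero =>
        constructor
        · intro v hv
          rw [hB0 v (fun h => by have := hSR v h; omega)]
          exact fun h => Strat.noConfusion h
        · intro v hv
          exact hB0 v (fun h => by have := hSR v h; omega)
      | succ n ih =>
        obtain ⟨ih1, ih2⟩ := ih
        have main : ∀ x, x = α n → R ≤ d x → (σ (n+1) x ≠ .A ∧ (R+1 ≤ d x → σ (n+1) x = .B)) := by
          intro x hx hRx
          -- neighbors' distances
          have hnbr : ∀ u ∈ T.neighborSet x, d u = d x + 1 ∨ d x = d u + 1 := by
            intro u hu
            exact adj_dist hTAcyc s₀ hu (hTConn s₀ u)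
          rcases Nat.lt_or_ge (d x) (R+1) with hx1 | hx1
          · -- d x = R
            have hdx : d x = R := by omega
            have hsub : (T.neighborSet x ∩ {u | σ n u = .A}) ∪
                (T.neighborSet x ∩ {u | σ n u = .AB}) ⊆
                {u ∈ T.neighborSet x | d u < d x} := by
              rintro u (⟨hu1, hu2⟩ | ⟨hu1, hu2⟩) <;>
              · refine ⟨hu1, ?_⟩
                rcases hnbr u hu1 with h | h
                · exfalso
                  have := ih2 u (by omega)
                  simp only [Set.mem_setOf_eq] at hu2
                  rw [this] at hu2; exact Strat.noConfusion hu2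
                · omega
            have hss : {u ∈ T.neighborSet x | d u < d x}.Subsingleton := by
              rintro u1 ⟨hu1, hd1⟩ u2 ⟨hu2, hd2⟩
              exact unique_parent hTAcyc s₀ ((T.mem_neighborSet _ _).mp hu1).symm
                ((T.mem_neighborSet _ _).mp hu2).symm hd1 hd2 (hTConn s₀ x)
            have hcard : cnt T (σ n) x .A + cnt T (σ n) x .AB ≤ 1 := by
              rw [cnt, cnt, ← Set.ncard_union_eq ?_ ?_ ?_]
              · have := (hss.anti hsub).eq_empty_or_singleton
                rcases this with h | ⟨u, h⟩
                · rw [h, Set.ncard_empty]; omega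
                · rw [h, Set.ncard_singleton]
              · rw [Set.disjoint_iff]
                rintro u ⟨⟨_, h1⟩, ⟨_, h2⟩⟩
                simp only [Set.mem_setOf_eq] at h1 h2
                rw [h1] at h2; exact Strat.noConfusion h2
              · exact (hlf x).subset (Set.inter_subset_left)
              · exact (hlf x).subset (Set.inter_subset_left)
            subst hx
            refine ⟨forced_ne_A hTReg hΔ hq hq1 hr hcase' (σ n) _ hcard (hBR n), ?_⟩
            intro h; omega
          · -- R+1 ≤ d x : forced B
            have hcA : cnt T (σ n) x .A = 0 := by
              apply cnt_eq_zero
              intro u hu1 hu2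
              rcases hnbr u hu1 with h | h
              · exact ih1 u (by omega) hu2
              · exact ih1 u (by omega) hu2
            have hcAB : cnt T (σ n) x .AB ≤ 1 := by
              have hsub : (T.neighborSet x ∩ {u | σ n u = .AB}) ⊆
                  {u ∈ T.neighborSet x | d u < d x} := by
                rintro u ⟨hu1, hu2⟩
                refine ⟨hu1, ?_⟩
                rcases hnbr u hu1 with h | h
                · exfalso
                  have := ih2 u (by omega)
                  simp only [Set.mem_setOf_eq] at hu2
                  rw [this] at hu2; exact Strat.noConfusion hu2
                · omega
              have hss : {u ∈ T.neighborSet x | d u < d x}.Subsingleton := by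
                rintro u1 ⟨hu1, hd1⟩ u2 ⟨hu2, hd2⟩
                exact unique_parent hTAcyc s₀ ((T.mem_neighborSet _ _).mp hu1).symm
                  ((T.mem_neighborSet _ _).mp hu2).symm hd1 hd2 (hTConn s₀ x)
              rw [cnt]
              rcases (hss.anti hsub).eq_empty_or_singleton with h | ⟨u, h⟩
              · rw [h, Set.ncard_empty]; omega
              · rw [h, Set.ncard_singleton]
            subst hx
            have hB := forced_B hTReg hΔ hq hq1 hr h1 h2 (σ n) _ hcA hcAB (hBR n)
            refine ⟨?_, fun _ => hB⟩
            rw [hB]; exact fun h => Strat.noConfusion h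
        constructor
        · intro v hv
          by_cases hveq : v = α n
          · exact (main v hveq hv).1
          · rw [hstay n v hveq]; exact ih1 v hv
        · intro v hv
          by_cases hveq : v = α n
          · exact (main v hveq (by omega)).2 hv
          · rw [hstay n v hveq]; exact ih2 v hv
    obtain ⟨v, hv⟩ := exists_far hTConn hlf s₀ (R+1)
    obtain ⟨n, hn⟩ := hall v
    have := (Inv n).2 v hv
    rw [this] at hn; exact Strat.noConfusion hn

/-- `A` is a best response in region 1, provided no AB's and at least one A neighbor. -/
lemma A_best_region1 {G : SimpleGraph V} {Δ : ℕ} (hreg : IsRegular G Δ) (hΔ : 2 ≤ Δ)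
    {q r : ℝ} (hq : 0 < q) (hq1 : q < 1) (hr : 0 < r)
    (hr1 : q*Δ ≤ 1) (hr2 : q*((Δ:ℝ)-1) ≤ r*Δ) (σ : V → Strat) (v : V)
    (hab : cnt G σ v .AB = 0) (ha : 1 ≤ cnt G σ v .A) :
    IsBestResponse G q r σ v .A := by
  have hsum := cnt_sum hreg hΔ σ v
  set a := cnt G σ v .A
  set b := cnt G σ v .B
  set ab := cnt G σ v .AB
  have hd : (2:ℝ) ≤ (Δ:ℕ) := by exact_mod_cast hΔ
  have hsum' : (a:ℝ) + b + ab = Δ := by exact_mod_cast hsum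
  have hab' : (ab:ℝ) = 0 := by exact_mod_cast hab
  have ha' : (1:ℝ) ≤ (a:ℝ) := by exact_mod_cast ha
  have hb0 : (0:ℝ) ≤ (b:ℝ) := Nat.cast_nonneg _
  have hq2 : 2*q ≤ 1 := by nlinarith
  intro s'
  rw [totalPayoff_eq hreg hΔ, totalPayoff_eq hreg hΔ]
  cases s' <;> simp only [pairPayoff]
  · exact le_refl _
  · nlinarith
  · rw [max_eq_right (by linarith : q ≤ 1 - q)]; nlinarith

/-- `A` is a best response in region 2 when few B-neighbors. -/
lemma A_best_region2 {G : SimpleGraph V} {Δ : ℕ} (hreg : IsRegular G Δ) (hΔ : 2 ≤ Δ)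
    {q r : ℝ} (hq : 0 < q) (hq1 : q < 1) (hr : 0 < r)
    (hr2 : 2*q + Δ*r ≤ 1) (σ : V → Strat) (v : V)
    (haab : 1 ≤ cnt G σ v .A + cnt G σ v .AB) (hb : q * (cnt G σ v .B : ℝ) ≤ r*Δ) :
    IsBestResponse G q r σ v .A := by
  have hsum := cnt_sum hreg hΔ σ v
  set a := cnt G σ v .A
  set b := cnt G σ v .B
  set ab := cnt G σ v .AB
  have hd : (2:ℝ) ≤ (Δ:ℕ) := by exact_mod_cast hΔ
  have hsum' : (a:ℝ) + b + ab = Δ := by exact_mod_cast hsum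
  have haab' : (1:ℝ) ≤ (a:ℝ) + ab := by exact_mod_cast haab
  have hb0 : (0:ℝ) ≤ (b:ℝ) := Nat.cast_nonneg _
  have ha0 : (0:ℝ) ≤ (a:ℝ) := Nat.cast_nonneg _
  have hab0 : (0:ℝ) ≤ (ab:ℝ) := Nat.cast_nonneg _
  have hq2 : 2*q ≤ 1 := by nlinarith
  intro s'
  rw [totalPayoff_eq hreg hΔ, totalPayoff_eq hreg hΔ]
  cases s' <;> simp only [pairPayoff]
  · exact le_refl _
  · nlinarith
  · rw [max_eq_right (by linarith : q ≤ 1 - q)]; nlinarith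

/-- `AB` is a best response in region 2 when many B-neighbors. -/
lemma AB_best_region2 {G : SimpleGraph V} {Δ : ℕ} (hreg : IsRegular G Δ) (hΔ : 2 ≤ Δ)
    {q r : ℝ} (hq : 0 < q) (hq1 : q < 1) (hr : 0 < r)
    (hr2 : 2*q + Δ*r ≤ 1) (σ : V → Strat) (v : V)
    (haab : 1 ≤ cnt G σ v .A + cnt G σ v .AB) (hb : r*Δ ≤ q * (cnt G σ v .B : ℝ)) :
    IsBestResponse G q r σ v .AB := by
  have hsum := cnt_sum hreg hΔ σ v
  set a := cnt G σ v .A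
  set b := cnt G σ v .B
  set ab := cnt G σ v .AB
  have hd : (2:ℝ) ≤ (Δ:ℕ) := by exact_mod_cast hΔ
  have hsum' : (a:ℝ) + b + ab = Δ := by exact_mod_cast hsum
  have haab' : (1:ℝ) ≤ (a:ℝ) + ab := by exact_mod_cast haab
  have hb0 : (0:ℝ) ≤ (b:ℝ) := Nat.cast_nonneg _
  have ha0 : (0:ℝ) ≤ (a:ℝ) := Nat.cast_nonneg _
  have hab0 : (0:ℝ) ≤ (ab:ℝ) := Nat.cast_nonneg _
  have hq2 : 2*q ≤ 1 := by nlinarith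
  have h2q : (0:ℝ) ≤ 1 - 2*q := by nlinarith
  intro s'
  rw [totalPayoff_eq hreg hΔ, totalPayoff_eq hreg hΔ]
  cases s' <;> simp only [pairPayoff] <;> rw [max_eq_right (by linarith : q ≤ 1 - q)]
  · nlinarith
  · nlinarith [mul_le_mul_of_nonneg_left haab' h2q, mul_nonneg hq.le ha0]

theorem epidemic_construction (Δ : ℕ) (hΔ : 2 ≤ Δ) (G : SimpleGraph V)
    (hGConn : G.Connected) (hGReg : IsRegular G Δ) {q r : ℝ}
    (hq : 0 < q) (hq1 : q < 1) (hr : 0 < r)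
    (hregion : (q*Δ ≤ 1 ∧ q*((Δ:ℝ)-1) ≤ r*Δ) ∨ 2*q + Δ*r ≤ 1) :
    Epidemic G q r := by
  classical
  obtain ⟨v₀⟩ := hGConn.nonempty
  have hlf : ∀ w : V, (G.neighborSet w).Finite := nbr_finite hGReg hΔ
  have hd2 : (2:ℝ) ≤ (Δ:ℕ) := by exact_mod_cast hΔ
  have hsph : ∀ m : ℕ, {v : V | G.dist v₀ v = m}.Finite := fun m =>
    (ball_finite hlf v₀ m).subset (fun v hv => ⟨hGConn v₀ v, le_of_eq hv⟩)
  set Ld : ℕ → List V := fun m => (hsph m).toFinset.toList with hLddef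
  have hLd : ∀ m v, v ∈ Ld m ↔ G.dist v₀ v = m := fun m v => by
    simp [hLddef, Finset.mem_toList, Set.Finite.mem_toFinset]
  set body : ℕ → List V := fun k => (List.range (k+1)).flatMap (fun i => Ld (i+1))
    with hbodydef
  set stage : ℕ → List V := fun k => body k ++ [v₀] with hstagedef
  set F : ℕ → List V := fun k => Nat.rec [] (fun k acc => acc ++ stage k) k with hFdef
  have hFs : ∀ k, F (k+1) = F k ++ stage k := fun k => rfl
  have hstlen : ∀ k, 1 ≤ (stage k).length := fun k => by
    rw [hstagedef]; simp
  have hFlen : ∀ k, k ≤ (F k).length := by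
    intro k
    induction k with
    | zero => simp
    | succ k ih =>
      rw [hFs k, List.length_append]
      have := hstlen k
      omega
  have hFpre : ∀ k m, k ≤ m → F k <+: F m := by
    intro k m hkm
    induction m with
    | zero => have : k = 0 := by omega
              subst this; exact List.prefix_refl _
    | succ m ih =>
      rcases Nat.lt_or_ge k (m+1) with h | h
      · exact (ih (by omega)).trans ⟨stage m, (hFs m).symm⟩
      · have : k = m+1 := by omega
        subst this; exact List.prefix_refl _
  set α : ℕ → V := fun n => (F (n+1)).getD n v₀ with halphadef
  have hgetDpre : ∀ a b, F a <+: F b → ∀ n, n < (F a).length →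
      (F b).getD n v₀ = (F a).getD n v₀ := by
    intro a b h n hn
    have hn' : n < (F b).length := lt_of_lt_of_le hn h.length_le
    rw [List.getD_eq_getElem?_getD, List.getD_eq_getElem?_getD,
      List.getElem?_eq_getElem hn, List.getElem?_eq_getElem hn']
    simp [(List.IsPrefix.getElem h hn).symm]
  have halpha : ∀ k n, n < (F k).length → α n = (F k).getD n v₀ := by
    intro k n hn
    have h1 : n < (F (n+1)).length := lt_of_lt_of_le (Nat.lt_succ_self n) (hFlen (n+1))
    rcases le_total (n+1) k with h | h
    · rw [halphadef]
      exact (hgetDpre (n+1) k (hFpre _ _ h) n h1).symm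
    · exact hgetDpre k (n+1) (hFpre _ _ h) n hn
  -- position of stage elements
  have hstagepos : ∀ k j, j < (stage k).length →
      α ((F k).length + j) = (stage k).getD j v₀ := by
    intro k j hj
    have hlen : ((F k).length + j) < (F (k+1)).length := by
      rw [hFs k, List.length_append]; omega
    rw [halpha (k+1) _ hlen, hFs k, List.getD_eq_getElem?_getD,
      List.getElem?_append_right (by omega), List.getD_eq_getElem?_getD]
    congr 2
    omega
  -- every element of a stage is hit by α before the end of that stage
  have hstageU : ∀ k v, v ∈ stage k → ∃ m, m < (F (k+1)).length ∧ α m = v := by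
    intro k v hv
    obtain ⟨j, hj, hjv⟩ := List.mem_iff_getElem.mp hv
    refine ⟨(F k).length + j, by rw [hFs k, List.length_append]; omega, ?_⟩
    rw [hstagepos k j hj, List.getD_eq_getElem?_getD, List.getElem?_eq_getElem hj]
    exact hjv
  -- membership facts
  have hv0stage : ∀ k, v₀ ∈ stage k := by
    intro k; rw [hstagedef]; simp
  have hbodymem : ∀ k v m, m ≤ k → v ∈ Ld (m+1) → v ∈ body k := by
    intro k v m hm hv
    rw [hbodydef]
    exact List.mem_flatMap.mpr ⟨m, List.mem_range.mpr (by omega), hv⟩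
  have hbodydist : ∀ k v, v ∈ body k → ∃ m ≤ k, G.dist v₀ v = m+1 := by
    intro k v hv
    rw [hbodydef] at hv
    obtain ⟨i, hi, hvi⟩ := List.mem_flatMap.mp hv
    exact ⟨i, by have := List.mem_range.mp hi; omega, (hLd _ _).mp hvi⟩
  -- decomposition of positions
  have hdecomp : ∀ n, ∃ k j, j < (stage k).length ∧ n = (F k).length + j := by
    intro n
    induction n with
    | zero => exact ⟨0, 0, hstlen 0, by simp [hFdef]⟩
    | succ n ih =>
      obtain ⟨k, j, hj, hn⟩ := ih
      rcases Nat.lt_or_ge (j+1) (stage k).length with h | h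
      · exact ⟨k, j+1, h, by omega⟩
      · have hj1 : j + 1 = (stage k).length := by omega
        refine ⟨k+1, 0, hstlen (k+1), ?_⟩
        rw [hFs k, List.length_append]
        omega
  -- the dynamics
  set rule : (V → Strat) → V → Strat := fun τ x =>
    if q * (cnt G τ x .B : ℝ) ≤ r * Δ then .A else .AB with hruledef
  have hrule_ne_B : ∀ τ x, rule τ x ≠ .B := by
    intro τ x
    simp only [hruledef]
    split <;> simp
  set σ : ℕ → V → Strat := fun n =>
    Nat.rec (fun v => if v = v₀ then Strat.A else Strat.B)
      (fun n τ => Function.update τ (α n) (rule τ (α n))) n with hσdef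
  have hσs : ∀ n, σ (n+1) = Function.update (σ n) (α n) (rule (σ n) (α n)) := fun n => rfl
  have hσ0 : ∀ v, σ 0 v = if v = v₀ then Strat.A else Strat.B := fun v => rfl
  have hstay : ∀ n v, v ≠ α n → σ (n+1) v = σ n v := by
    intro n v hv
    rw [hσs n]
    exact Function.update_of_ne hv _ _
  have hupd : ∀ n, σ (n+1) (α n) = rule (σ n) (α n) := by
    intro n
    rw [hσs n]
    exact Function.update_self _ _ _
  -- the updated set
  set U : ℕ → Set V := fun n => {v | v = v₀ ∨ ∃ m, m < n ∧ α m = v} with hUdef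
  have hUmono : ∀ n n', n ≤ n' → U n ⊆ U n' := by
    intro n n' h v hv
    rcases hv with hv | ⟨m, hm, hmv⟩
    · exact Or.inl hv
    · exact Or.inr ⟨m, by omega, hmv⟩
  -- C1 : updated vertices never play B
  have hC1 : ∀ n v, v ∈ U n → σ n v ≠ .B := by
    intro n
    induction n with
    | zero =>
      rintro v (hv | ⟨m, hm, _⟩)
      · rw [hσ0, if_pos hv]; simp
      · omega
    | succ n ih =>
      intro v hv
      by_cases hveq : v = α n
      · subst hveq
        rw [hupd n]
        exact hrule_ne_B _ _
      · rw [hstay n v hveq]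
        apply ih
        rcases hv with hv | ⟨m, hm, hmv⟩
        · exact Or.inl hv
        · refine Or.inr ⟨m, ?_, hmv⟩
          rcases Nat.lt_or_ge m n with h | h
          · exact h
          · exfalso; have : m = n := by omega
            subst this; exact hveq hmv.symm
  -- schedule property: every updated vertex has a previously updated neighbor
  have hSP : ∀ n, ∃ u ∈ G.neighborSet (α n), u ∈ U n := by
    intro n
    obtain ⟨k, j, hj, rfl⟩ := hdecomp n
    have hx := hstagepos k j hj
    rw [hstagedef] at hx
    simp only at hx
    rcases Nat.lt_or_ge j (body k).length with hjb | hjb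
    · -- α n is an element of body k
      have hxb : α ((F k).length + j) ∈ body k := by
        rw [hx, List.getD_eq_getElem?_getD, List.getElem?_append_left hjb,
          ← List.getD_eq_getElem?_getD]
        rw [List.getD_eq_getElem?_getD, List.getElem?_eq_getElem hjb]
        exact List.getElem_mem hjb
      obtain ⟨m, hm, hdx⟩ := hbodydist k _ hxb
      rcases Nat.eq_zero_or_pos m with rfl | hmpos
      · -- distance 1 : v₀ is a neighbor
        refine ⟨v₀, ?_, Or.inl rfl⟩
        have : G.Adj v₀ (α ((F k).length + j)) :=
          SimpleGraph.dist_eq_one_iff_adj.mp hdx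
        exact this.symm
      · -- distance m+1 ≥ 2 : neighbor at distance m, updated in stage k-1
        obtain ⟨u, hadj, hdu⟩ := exists_adj_dist (hGConn v₀ _) hdx
        have hmk : 1 ≤ k := by omega
        have humem : u ∈ stage (k-1) := by
          rw [hstagedef]
          refine List.mem_append.mpr (Or.inl ?_)
          apply hbodymem (k-1) u (m-1) (by omega)
          rw [hLd]
          rw [(by omega : m - 1 + 1 = m)]
          exact hdu
        obtain ⟨m', hm', hm'u⟩ := hstageU (k-1) u humem
        refine ⟨u, hadj.symm, Or.inr ⟨m', ?_, hm'u⟩⟩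
        rw [(by omega : k - 1 + 1 = k)] at hm'
        have := hFlen k
        omega
    · -- α n = v₀
      have hxv : α ((F k).length + j) = v₀ := by
        rw [hx, List.getD_eq_getElem?_getD, List.getElem?_append_right hjb]
        have hj' : j - (body k).length = 0 := by
          rw [hstagedef] at hj
          simp only [List.length_append, List.length_singleton] at hj
          omega
        rw [hj']
        rfl
      -- v₀ has a neighbor, which is at distance 1, hence in body k before position j
      have hnon : (G.neighborSet v₀).Nonempty := by
        rw [← Set.ncard_pos (hlf v₀), hGReg v₀]
        omega
      obtain ⟨u, hu⟩ := hnon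
      have hadj : G.Adj v₀ u := hu
      have hdu : G.dist v₀ u = 1 := SimpleGraph.dist_eq_one_iff_adj.mpr hadj
      have humem : u ∈ body k := hbodymem k u 0 (by omega) ((hLd 1 u).mpr hdu)
      obtain ⟨j', hj', hj'u⟩ := List.mem_iff_getElem.mp humem
      refine ⟨u, ?_, Or.inr ⟨(F k).length + j', ?_, ?_⟩⟩
      · rw [hxv]; exact hadj
      · omega
      · rw [hstagepos k j' (by rw [hstagedef]; simp; omega),
          hstagedef]
        simp only
        rw [List.getD_eq_getElem?_getD, List.getElem?_append_left hj',
          List.getElem?_eq_getElem hj']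
        exact hj'u
  -- at least one non-B neighbor gives a positive (A or AB) count
  have hcnt1 : ∀ (τ : V → Strat) x, (∃ u ∈ G.neighborSet x, τ u ≠ .B) →
      1 ≤ cnt G τ x .A + cnt G τ x .AB := by
    intro τ x ⟨u, hu, huB⟩
    cases hτu : τ u with
    | A =>
      have : 0 < cnt G τ x .A := by
        rw [cnt, Set.ncard_pos ((hlf x).subset Set.inter_subset_left)]
        exact ⟨u, hu, hτu⟩
      omega
    | B => exact absurd hτu huB
    | AB =>
      have : 0 < cnt G τ x .AB := by
        rw [cnt, Set.ncard_pos ((hlf x).subset Set.inter_subset_left)]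
        exact ⟨u, hu, hτu⟩
      omega
  have hprec : ∀ n, 1 ≤ cnt G (σ n) (α n) .A + cnt G (σ n) (α n) .AB := by
    intro n
    obtain ⟨u, hu, huU⟩ := hSP n
    exact hcnt1 _ _ ⟨u, hu, hC1 n u huU⟩
  -- in region 1 the rule always fires the A branch
  have hreg1B : (q*Δ ≤ 1 ∧ q*((Δ:ℝ)-1) ≤ r*Δ) → ∀ n,
      q * (cnt G (σ n) (α n) .B : ℝ) ≤ r*Δ := by
    rintro ⟨h1a, h1b⟩ n
    have hsum := cnt_sum hGReg hΔ (σ n) (α n)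
    have h1 := hprec n
    have hble : cnt G (σ n) (α n) .B + 1 ≤ Δ := by omega
    have hble' : (cnt G (σ n) (α n) .B : ℝ) ≤ (Δ:ℝ) - 1 := by
      have : ((cnt G (σ n) (α n) .B : ℕ):ℝ) + 1 ≤ (Δ:ℝ) := by exact_mod_cast hble
      linarith
    calc q * (cnt G (σ n) (α n) .B : ℝ) ≤ q * ((Δ:ℝ)-1) :=
          mul_le_mul_of_nonneg_left hble' hq.le
      _ ≤ r*Δ := h1b
  -- in region 1 nobody ever plays AB
  have hnoAB : (q*Δ ≤ 1 ∧ q*((Δ:ℝ)-1) ≤ r*Δ) → ∀ n v, σ n v ≠ .AB := by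
    intro hreg1 n
    induction n with
    | zero =>
      intro v
      rw [hσ0 v]
      split <;> simp
    | succ n ih =>
      intro v
      by_cases hveq : v = α n
      · subst hveq
        rw [hupd n]
        simp only [hruledef, if_pos (hreg1B hreg1 n)]
        simp
      · rw [hstay n v hveq]; exact ih v
  -- every update is a best response
  have hBR : ∀ n, IsBestResponse G q r (σ n) (α n) (σ (n+1) (α n)) := by
    intro n
    rw [hupd n]
    by_cases hc : q * (cnt G (σ n) (α n) .B : ℝ) ≤ r * Δ
    · have : rule (σ n) (α n) = .A := by simp only [hruledef, if_pos hc]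
      rw [this]
      rcases hregion with ⟨h1a, h1b⟩ | h2
      · have hab0 : cnt G (σ n) (α n) .AB = 0 :=
          cnt_eq_zero (fun u _ => hnoAB ⟨h1a, h1b⟩ n u)
        refine A_best_region1 hGReg hΔ hq hq1 hr h1a h1b _ _ hab0 ?_
        have := hprec n
        omega
      · exact A_best_region2 hGReg hΔ hq hq1 hr h2 _ _ (hprec n) hc
    · have : rule (σ n) (α n) = .AB := by simp only [hruledef, if_neg hc]
      rw [this]
      rcases hregion with hreg1 | h2
      · exact absurd (hreg1B hreg1 n) hc
      · exact AB_best_region2 hGReg hΔ hq hq1 hr h2 _ _ (hprec n)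
          (le_of_lt (lt_of_not_ge hc))
  -- coverage: vertices of bounded distance are updated by the end of stage k
  have hUdist : ∀ (u : V) (k n : ℕ), G.dist v₀ u ≤ k + 1 → (F (k+1)).length ≤ n →
      u ∈ U n := by
    intro u k n hdu hn
    by_cases huv : u = v₀
    · exact Or.inl huv
    · have hdu0 : G.dist v₀ u ≠ 0 := by
        intro h
        exact huv (hGConn.dist_eq_zero_iff.mp h).symm
      obtain ⟨m, hm⟩ : ∃ m, G.dist v₀ u = m + 1 := by
        cases h : G.dist v₀ u with
        | zero => exact absurd h hdu0
        | succ m => exact ⟨m, rfl⟩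
      have : u ∈ stage k := by
        rw [hstagedef]
        refine List.mem_append.mpr (Or.inl ?_)
        exact hbodymem k u m (by omega) ((hLd _ _).mpr hm)
      obtain ⟨m', hm', hm'u⟩ := hstageU k u this
      exact Or.inr ⟨m', by omega, hm'u⟩
  -- eventually everybody plays A
  have hallA : ∀ v, ∃ n, σ n v = .A := by
    intro v
    by_cases hveq : v = v₀
    · exact ⟨0, by rw [hσ0, if_pos hveq]⟩
    · obtain ⟨m, hm⟩ : ∃ m, G.dist v₀ v = m + 1 := by
        cases h : G.dist v₀ v with
        | zero =>
          exfalso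
          rw [hGConn.dist_eq_zero_iff] at h
          exact hveq h.symm
        | succ m => exact ⟨m, rfl⟩
      set k := m + 2 with hk
      have hvb : v ∈ body k := hbodymem k v m (by omega) ((hLd _ _).mpr hm)
      obtain ⟨j, hj, hjv⟩ := List.mem_iff_getElem.mp hvb
      set n := (F k).length + j with hn
      have hαn : α n = v := by
        rw [hn, hstagepos k j (by rw [hstagedef]; simp only [List.length_append]; omega)]
        rw [hstagedef]
        simp only
        rw [List.getD_eq_getElem?_getD, List.getElem?_append_left hj,
          List.getElem?_eq_getElem hj]
        exact hjv
      have hnb : ∀ u ∈ G.neighborSet v, σ n u ≠ .B := by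
        intro u hu
        apply hC1 n u
        apply hUdist u (k-1) n
        · have h1 : G.dist v₀ u ≤ G.dist v₀ v + G.dist v u := hGConn.dist_triangle
          have h2 : G.dist v u = 1 := SimpleGraph.dist_eq_one_iff_adj.mpr hu
          omega
        · rw [(by omega : k - 1 + 1 = k), hn]
          omega
      refine ⟨n + 1, ?_⟩
      have hcB : cnt G (σ n) v .B = 0 := cnt_eq_zero hnb
      have := hupd n
      rw [hαn] at this
      rw [this]
      simp only [hruledef, hcB]
      rw [if_pos (by simp only [Nat.cast_zero, mul_zero]; positivity)]
  -- assemble the epidemic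
  refine ⟨{v₀}, α, σ, Set.finite_singleton v₀, ?_, ?_, ?_, hBR, hstay, hallA⟩
  · intro v
    by_cases hveq : v = v₀
    · obtain ⟨m', _, hm'⟩ := hstageU 0 v₀ (hv0stage 0)
      exact ⟨m', by rw [hm', hveq]⟩
    · obtain ⟨m, hm⟩ : ∃ m, G.dist v₀ v = m + 1 := by
        cases h : G.dist v₀ v with
        | zero =>
          exfalso
          rw [hGConn.dist_eq_zero_iff] at h
          exact hveq h.symm
        | succ m => exact ⟨m, rfl⟩
      have : v ∈ stage m := by
        rw [hstagedef]
        exact List.mem_append.mpr (Or.inl (hbodymem m v m (le_refl m) ((hLd _ _).mpr hm)))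
      obtain ⟨m', _, hm'⟩ := hstageU m v this
      exact ⟨m', hm'⟩
  · intro v hv
    rw [Set.mem_singleton_iff] at hv
    rw [hσ0, if_pos hv]
  · intro v hv
    rw [Set.mem_singleton_iff] at hv
    rw [hσ0, if_neg hv]


end Aux

/-- The epidemic region of the infinite `Δ`-regular tree `T_Δ` is contained in
the epidemic region of every connected infinite `Δ`-regular graph `G`: whenever `A` becomes
epidemic in `(T_Δ, q, r)`, it also becomes epidemic in `(G, q, r)`. -/
theorem tree_region_minimum {W V : Type*} (Δ : ℕ) (hΔ : 2 ≤ Δ)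
    (T : SimpleGraph W) (hTInf : Infinite W) (hTConn : T.Connected)
    (hTAcyc : T.IsAcyclic) (hTReg : IsRegular T Δ)
    (G : SimpleGraph V) (hGInf : Infinite V) (hGConn : G.Connected) (hGReg : IsRegular G Δ) :
    epidemicRegion T ⊆ epidemicRegion G := by
  rintro ⟨q, r⟩ ⟨hq, hq1, hr, hepi⟩
  refine ⟨hq, hq1, hr, ?_⟩
  simp only at hq hq1 hr hepi ⊢
  by_cases hreg : (q*Δ ≤ 1 ∧ q*((Δ:ℝ)-1) ≤ r*Δ) ∨ 2*q + Δ*r ≤ 1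
  · exact epidemic_construction Δ hΔ G hGConn hGReg hq hq1 hr hreg
  · exfalso
    push_neg at hreg
    obtain ⟨h1, h2⟩ := hreg
    have hcase : 1 < q*Δ ∨ r*Δ < q*((Δ:ℝ)-1) := by
      by_cases hqd : q*Δ ≤ 1
      · exact Or.inr (h1 hqd)
      · exact Or.inl (lt_of_not_ge hqd)
    exact no_epidemic_tree Δ hΔ T hTInf hTConn hTAcyc hTReg hq hq1 hr h2 hcase hepi

end Contagion
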